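/- The function x ↦ (Δ'(x)(x² + a²cos²θ) − 4xΔ(x)) / (4x√(Δ(x)) a sinθ) has derivative (x² + a²cos²θ)((M − x)³ − M(M² − a²)) / (2x²Δ(x)^{3/2} a sinθ), which is strictly negative for x ∈ (r₊, ∞); moreover the function tends to +∞ as x → r₊⁺ and to −∞ as x → ∞. Hence it is a strictly decreasing bijection from (r₊, ∞) onto ℝ. -/

import Mathlib

open Filter Topology

set_option maxHeartbeats 1000000

private lemma psi_aux_delta_pos {M a s0 : ℝ} (hs0 : s0 ^ 2 = M ^ 2 - a ^ 2)
    (hs0pos : 0 < s0) {x : ℝ} (hx : M + s0 < x) :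
    0 < x ^ 2 - 2 * M * x + a ^ 2 := by
  nlinarith [hs0, mul_pos (show 0 < x - M - s0 by linarith)
    (show 0 < x - M + s0 by linarith)]

private lemma psi_aux_key (M a θ : ℝ) (hM : 0 < M) (ha : 0 < a)
    (hsin : 0 < Real.sin θ) {s0 : ℝ} (hs0 : s0 ^ 2 = M ^ 2 - a ^ 2)
    (hs0pos : 0 < s0) {x : ℝ} (hx : M + s0 < x) :
    HasDerivAt (fun x => ((2 * x - 2 * M) * (x ^ 2 + a ^ 2 * Real.cos θ ^ 2) -
      4 * x * (x ^ 2 - 2 * M * x + a ^ 2)) /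
      (4 * x * Real.sqrt (x ^ 2 - 2 * M * x + a ^ 2) * a * Real.sin θ))
    ((x ^ 2 + a ^ 2 * Real.cos θ ^ 2) * ((M - x) ^ 3 - M * (M ^ 2 - a ^ 2)) /
      (2 * x ^ 2 * Real.sqrt ((x ^ 2 - 2 * M * x + a ^ 2) ^ 3) * a * Real.sin θ)) x := by
  have hx0 : 0 < x := by nlinarith
  have hΔx : 0 < x ^ 2 - 2 * M * x + a ^ 2 := psi_aux_delta_pos hs0 hs0pos hx
  set u := Real.sqrt (x ^ 2 - 2 * M * x + a ^ 2) with hudef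
  have hu2 : u ^ 2 = x ^ 2 - 2 * M * x + a ^ 2 := Real.sq_sqrt hΔx.le
  have hupos : 0 < u := Real.sqrt_pos.mpr hΔx
  have hA : HasDerivAt (fun y : ℝ => 2 * y - 2 * M) 2 x := by
    simpa using ((hasDerivAt_id x).const_mul (2 : ℝ)).sub_const (2 * M)
  have hB : HasDerivAt (fun y : ℝ => y ^ 2 + a ^ 2 * Real.cos θ ^ 2) (2 * x) x := by
    simpa using (hasDerivAt_pow 2 x).add_const (a ^ 2 * Real.cos θ ^ 2)
  have h4 : HasDerivAt (fun y : ℝ => 4 * y) 4 x := by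
    simpa using (hasDerivAt_id x).const_mul (4 : ℝ)
  have hg : HasDerivAt (fun y : ℝ => y ^ 2 - 2 * M * y + a ^ 2) (2 * x - 2 * M) x := by
    have h := ((hasDerivAt_pow 2 x).sub ((hasDerivAt_id x).const_mul (2 * M))).add_const (a ^ 2)
    convert h using 1
    all_goals norm_num
    all_goals rfl
  have hsq : HasDerivAt (fun y : ℝ => Real.sqrt (y ^ 2 - 2 * M * y + a ^ 2))
      ((2 * x - 2 * M) / (2 * u)) x := hg.sqrt hΔx.ne'
  have hnum := (hA.mul hB).sub (h4.mul hg)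
  have hden := ((h4.mul hsq).mul_const a).mul_const (Real.sin θ)
  have hden_ne : 4 * x * u * a * Real.sin θ ≠ 0 := by positivity
  have hdiv := hnum.div hden hden_ne
  have hs3 : Real.sqrt ((x ^ 2 - 2 * M * x + a ^ 2) ^ 3) = u ^ 3 := by
    rw [← hu2, show ((u ^ 2) ^ 3 : ℝ) = (u ^ 3) ^ 2 by ring,
      Real.sqrt_sq (by positivity)]
  convert hdiv using 1
  · rfl
  · rfl
  · rfl
  rw [hs3]
  simp only [Pi.mul_apply, Pi.sub_apply, ← hudef]
  have ha2 : a ^ 2 = u ^ 2 - x ^ 2 + 2 * M * x := by linarith [hu2]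
  rw [ha2]
  field_simp
  ring

private lemma psi_aux_top (M a θ : ℝ) (hM : 0 < M) (ha : 0 < a)
    (hsin : 0 < Real.sin θ) {s0 : ℝ} (hs0 : s0 ^ 2 = M ^ 2 - a ^ 2)
    (hs0pos : 0 < s0) :
    Tendsto (fun x => ((2 * x - 2 * M) * (x ^ 2 + a ^ 2 * Real.cos θ ^ 2) -
      4 * x * (x ^ 2 - 2 * M * x + a ^ 2)) /
      (4 * x * Real.sqrt (x ^ 2 - 2 * M * x + a ^ 2) * a * Real.sin θ))
      (𝓝[>] (M + s0)) atTop := by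
  have hrp_pos : 0 < M + s0 := by linarith
  have hΔrp : (M + s0) ^ 2 - 2 * M * (M + s0) + a ^ 2 = 0 := by linear_combination hs0
  have hnum_cont : Continuous (fun x : ℝ => (2 * x - 2 * M) * (x ^ 2 + a ^ 2 * Real.cos θ ^ 2) -
      4 * x * (x ^ 2 - 2 * M * x + a ^ 2)) := by fun_prop
  have hden_cont : Continuous (fun x : ℝ =>
      4 * x * Real.sqrt (x ^ 2 - 2 * M * x + a ^ 2) * a * Real.sin θ) := by
    apply Continuous.mul _ continuous_const
    apply Continuous.mul _ continuous_const
    exact (continuous_const.mul continuous_id).mul (Real.continuous_sqrt.comp (by fun_prop))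
  have hL : 0 < (2 * (M + s0) - 2 * M) * ((M + s0) ^ 2 + a ^ 2 * Real.cos θ ^ 2) -
      4 * (M + s0) * ((M + s0) ^ 2 - 2 * M * (M + s0) + a ^ 2) := by
    rw [hΔrp]
    have : 0 < (M + s0) ^ 2 + a ^ 2 * Real.cos θ ^ 2 := by positivity
    nlinarith
  have hnum_t : Tendsto (fun x : ℝ => (2 * x - 2 * M) * (x ^ 2 + a ^ 2 * Real.cos θ ^ 2) -
      4 * x * (x ^ 2 - 2 * M * x + a ^ 2)) (𝓝[>] (M + s0))
      (𝓝 ((2 * (M + s0) - 2 * M) * ((M + s0) ^ 2 + a ^ 2 * Real.cos θ ^ 2) -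
      4 * (M + s0) * ((M + s0) ^ 2 - 2 * M * (M + s0) + a ^ 2))) :=
    (hnum_cont.tendsto _).mono_left nhdsWithin_le_nhds
  have hden_t : Tendsto (fun x : ℝ =>
      4 * x * Real.sqrt (x ^ 2 - 2 * M * x + a ^ 2) * a * Real.sin θ)
      (𝓝[>] (M + s0)) (𝓝[>] 0) := by
    rw [tendsto_nhdsWithin_iff]
    constructor
    · have h0 : (4 * (M + s0) * Real.sqrt ((M + s0) ^ 2 - 2 * M * (M + s0) + a ^ 2) * a *
          Real.sin θ) = 0 := by rw [hΔrp, Real.sqrt_zero]; ring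
      have := (hden_cont.tendsto (M + s0)).mono_left
        (nhdsWithin_le_nhds (s := Set.Ioi (M + s0)))
      rwa [h0] at this
    · filter_upwards [self_mem_nhdsWithin] with x hx
      rw [Set.mem_Ioi] at hx ⊢
      have hx0 : 0 < x := lt_trans hrp_pos hx
      have := Real.sqrt_pos.mpr (psi_aux_delta_pos hs0 hs0pos hx)
      positivity
  have hinv := tendsto_inv_nhdsGT_zero.comp hden_t
  have := Filter.Tendsto.pos_mul_atTop hL hnum_t hinv
  simpa [div_eq_mul_inv, Function.comp] using this

private lemma psi_aux_numdiv (M a θ : ℝ) (hM : 0 < M) (ha : 0 < a) {s0 : ℝ}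
    (hs0pos : 0 < s0) :
    Tendsto (fun x : ℝ => ((2 * x - 2 * M) * (x ^ 2 + a ^ 2 * Real.cos θ ^ 2) -
      4 * x * (x ^ 2 - 2 * M * x + a ^ 2)) / x ^ 2) atTop atBot := by
  set c := a ^ 2 * Real.cos θ ^ 2 with hcdef
  have hzero1 : Tendsto (fun x : ℝ => (2 * c - 4 * a ^ 2) / x) atTop (𝓝 0) :=
    tendsto_const_nhds.div_atTop tendsto_id
  have hzero2 : Tendsto (fun x : ℝ => 2 * M * c / x ^ 2) atTop (𝓝 0) :=
    tendsto_const_nhds.div_atTop (tendsto_pow_atTop two_ne_zero)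
  have hlin : Tendsto (fun x : ℝ => -2 * x) atTop atBot :=
    (tendsto_const_mul_atBot_of_neg (show (-2 : ℝ) < 0 by norm_num)).mpr tendsto_id
  have h1 : Tendsto (fun x : ℝ => -2 * x + (6 * M + ((2 * c - 4 * a ^ 2) / x -
      2 * M * c / x ^ 2))) atTop atBot :=
    hlin.atBot_add (tendsto_const_nhds.add (hzero1.sub hzero2))
  refine h1.congr' ?_
  filter_upwards [eventually_gt_atTop 0] with x hx0
  field_simp
  ring

private lemma psi_aux_sqrt1 (M a : ℝ) (hM : 0 < M) (ha : 0 < a) {s0 : ℝ}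
    (hs0 : s0 ^ 2 = M ^ 2 - a ^ 2) (hs0pos : 0 < s0) :
    Tendsto (fun x : ℝ => Real.sqrt (x ^ 2 - 2 * M * x + a ^ 2) / x) atTop (𝓝 1) := by
  have hrp_pos : 0 < M + s0 := by linarith
  have hq0 : Tendsto (fun x : ℝ => 1 - 2 * M / x + a ^ 2 / x ^ 2) atTop (𝓝 1) := by
    have h1 : Tendsto (fun x : ℝ => 2 * M / x) atTop (𝓝 0) :=
      tendsto_const_nhds.div_atTop tendsto_id
    have h2 : Tendsto (fun x : ℝ => a ^ 2 / x ^ 2) atTop (𝓝 0) :=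
      tendsto_const_nhds.div_atTop (tendsto_pow_atTop two_ne_zero)
    have h3 : Tendsto (fun x : ℝ => 1 - 2 * M / x + a ^ 2 / x ^ 2) atTop (𝓝 (1 - 0 + 0)) :=
      (tendsto_const_nhds.sub h1).add h2
    simpa using h3
  have hq : Tendsto (fun x : ℝ => (x ^ 2 - 2 * M * x + a ^ 2) / x ^ 2) atTop (𝓝 1) := by
    refine hq0.congr' ?_
    filter_upwards [eventually_gt_atTop 0] with x hx0
    field_simp
  have h := (Real.continuous_sqrt.tendsto 1).comp hq
  rw [Real.sqrt_one] at h
  refine h.congr' ?_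
  filter_upwards [eventually_gt_atTop (M + s0)] with x hx
  have hx0 : 0 < x := lt_trans hrp_pos hx
  have hΔx := psi_aux_delta_pos hs0 hs0pos hx
  show Real.sqrt ((x ^ 2 - 2 * M * x + a ^ 2) / x ^ 2) = _
  rw [Real.sqrt_div hΔx.le, Real.sqrt_sq hx0.le]

private lemma psi_aux_bot (M a θ : ℝ) (hM : 0 < M) (ha : 0 < a)
    (hsin : 0 < Real.sin θ) {s0 : ℝ} (hs0 : s0 ^ 2 = M ^ 2 - a ^ 2)
    (hs0pos : 0 < s0) :
    Tendsto (fun x => ((2 * x - 2 * M) * (x ^ 2 + a ^ 2 * Real.cos θ ^ 2) -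
      4 * x * (x ^ 2 - 2 * M * x + a ^ 2)) /
      (4 * x * Real.sqrt (x ^ 2 - 2 * M * x + a ^ 2) * a * Real.sin θ)) atTop atBot := by
  have hrp_pos : 0 < M + s0 := by linarith
  have hnum_div := psi_aux_numdiv M a θ hM ha hs0pos
  have hsq1 := psi_aux_sqrt1 M a hM ha hs0 hs0pos
  have hfac : Tendsto (fun x : ℝ =>
      (4 * (Real.sqrt (x ^ 2 - 2 * M * x + a ^ 2) / x) * a * Real.sin θ)⁻¹) atTop
      (𝓝 ((4 * 1 * a * Real.sin θ)⁻¹)) :=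
    (((hsq1.const_mul 4).mul_const a).mul_const (Real.sin θ)).inv₀ (by positivity)
  have hmain := Filter.Tendsto.atBot_mul_pos (show (0:ℝ) < (4 * 1 * a * Real.sin θ)⁻¹ by positivity)
    hnum_div hfac
  refine hmain.congr' ?_
  filter_upwards [eventually_gt_atTop (M + s0)] with x hx
  have hx0 : 0 < x := lt_trans hrp_pos hx
  have hu := Real.sqrt_pos.mpr (psi_aux_delta_pos hs0 hs0pos hx)
  field_simp

/-- The parametrization function `ψ(x)`: the function
`x ↦ (Δ'(x)(x² + a²cos²θ) − 4xΔ(x)) / (4x√(Δ(x)) a sinθ)` has on `(r₊,∞)` the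
derivative `(x² + a²cos²θ)((M − x)³ − M(M² − a²)) / (2x²√(Δ(x)³) a sinθ)`,
which is strictly negative; it tends to `+∞` as `x → r₊⁺` and to `−∞` as
`x → ∞`; hence it is a strictly decreasing bijection from `(r₊,∞)` onto `ℝ`. -/
theorem psi_parametrization_bijective (M a θ : ℝ) (hM : 0 < M)
    (ha : 0 < a) (haM : a < M) (hθ : θ ∈ Set.Ioo 0 Real.pi)
    (Δ : ℝ → ℝ) (hΔ : ∀ x, Δ x = x ^ 2 - 2 * M * x + a ^ 2)
    (rp : ℝ) (hrp : rp = M + Real.sqrt (M ^ 2 - a ^ 2))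
    (f : ℝ → ℝ)
    (hf : ∀ x, f x = ((2 * x - 2 * M) * (x ^ 2 + a ^ 2 * Real.cos θ ^ 2) -
      4 * x * Δ x) / (4 * x * Real.sqrt (Δ x) * a * Real.sin θ)) :
    (∀ x ∈ Set.Ioi rp,
      deriv f x = (x ^ 2 + a ^ 2 * Real.cos θ ^ 2) *
        ((M - x) ^ 3 - M * (M ^ 2 - a ^ 2)) /
        (2 * x ^ 2 * Real.sqrt (Δ x ^ 3) * a * Real.sin θ) ∧
      deriv f x < 0) ∧
    Tendsto f (𝓝[>] rp) atTop ∧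
    Tendsto f atTop atBot ∧
    StrictAntiOn f (Set.Ioi rp) ∧
    Set.BijOn f (Set.Ioi rp) Set.univ := by
  obtain ⟨hθ0, hθπ⟩ := hθ
  have hsin : 0 < Real.sin θ := Real.sin_pos_of_pos_of_lt_pi hθ0 hθπ
  have hMa : 0 < M ^ 2 - a ^ 2 := by nlinarith
  have hΔ' : Δ = fun x => x ^ 2 - 2 * M * x + a ^ 2 := funext hΔ
  subst hΔ'
  set s0 := Real.sqrt (M ^ 2 - a ^ 2) with hs0def
  have hs0 : s0 ^ 2 = M ^ 2 - a ^ 2 := Real.sq_sqrt hMa.le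
  have hs0pos : 0 < s0 := Real.sqrt_pos.mpr hMa
  subst hrp
  have hfun : f = fun x => ((2 * x - 2 * M) * (x ^ 2 + a ^ 2 * Real.cos θ ^ 2) -
      4 * x * (x ^ 2 - 2 * M * x + a ^ 2)) /
      (4 * x * Real.sqrt (x ^ 2 - 2 * M * x + a ^ 2) * a * Real.sin θ) := by
    funext x; exact hf x
  subst hfun
  beta_reduce
  have hrp_pos : 0 < M + s0 := by linarith
  have key := fun (x : ℝ) (hx : M + s0 < x) => psi_aux_key M a θ hM ha hsin hs0 hs0pos hx
  have bullet1 : ∀ x ∈ Set.Ioi (M + s0),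
      deriv (fun x => ((2 * x - 2 * M) * (x ^ 2 + a ^ 2 * Real.cos θ ^ 2) -
        4 * x * (x ^ 2 - 2 * M * x + a ^ 2)) /
        (4 * x * Real.sqrt (x ^ 2 - 2 * M * x + a ^ 2) * a * Real.sin θ)) x =
        (x ^ 2 + a ^ 2 * Real.cos θ ^ 2) * ((M - x) ^ 3 - M * (M ^ 2 - a ^ 2)) /
        (2 * x ^ 2 * Real.sqrt ((x ^ 2 - 2 * M * x + a ^ 2) ^ 3) * a * Real.sin θ) ∧
      deriv (fun x => ((2 * x - 2 * M) * (x ^ 2 + a ^ 2 * Real.cos θ ^ 2) -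
        4 * x * (x ^ 2 - 2 * M * x + a ^ 2)) /
        (4 * x * Real.sqrt (x ^ 2 - 2 * M * x + a ^ 2) * a * Real.sin θ)) x < 0 := by
    intro x hx
    rw [Set.mem_Ioi] at hx
    have hx0 : 0 < x := lt_trans hrp_pos hx
    have hΔx : 0 < x ^ 2 - 2 * M * x + a ^ 2 := psi_aux_delta_pos hs0 hs0pos hx
    have hd := (key x hx).deriv
    refine ⟨hd, ?_⟩
    rw [hd]
    apply div_neg_of_neg_of_pos
    · have h1 : (M - x) ^ 3 < 0 := by
        have h : M - x < 0 := by linarith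
        exact (by decide : Odd 3).pow_neg h
      have h2 : 0 < x ^ 2 + a ^ 2 * Real.cos θ ^ 2 := by positivity
      have h3 : (M - x) ^ 3 - M * (M ^ 2 - a ^ 2) < 0 := by nlinarith
      exact mul_neg_of_pos_of_neg h2 h3
    · have : 0 < Real.sqrt ((x ^ 2 - 2 * M * x + a ^ 2) ^ 3) :=
        Real.sqrt_pos.mpr (by positivity)
      positivity
  have htop := psi_aux_top M a θ hM ha hsin hs0 hs0pos
  have hbot := psi_aux_bot M a θ hM ha hsin hs0 hs0pos
  have hcont : ContinuousOn (fun x => ((2 * x - 2 * M) * (x ^ 2 + a ^ 2 * Real.cos θ ^ 2) -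
      4 * x * (x ^ 2 - 2 * M * x + a ^ 2)) /
      (4 * x * Real.sqrt (x ^ 2 - 2 * M * x + a ^ 2) * a * Real.sin θ))
      (Set.Ioi (M + s0)) :=
    fun x hx => (key x hx).continuousAt.continuousWithinAt
  have hanti : StrictAntiOn (fun x => ((2 * x - 2 * M) * (x ^ 2 + a ^ 2 * Real.cos θ ^ 2) -
      4 * x * (x ^ 2 - 2 * M * x + a ^ 2)) /
      (4 * x * Real.sqrt (x ^ 2 - 2 * M * x + a ^ 2) * a * Real.sin θ))
      (Set.Ioi (M + s0)) := by
    refine strictAntiOn_of_deriv_neg (convex_Ioi _) hcont ?_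
    intro x hx
    rw [interior_Ioi] at hx
    exact (bullet1 x hx).2
  refine ⟨bullet1, htop, hbot, hanti, fun x _ => trivial, hanti.injOn, ?_⟩
  intro y _
  obtain ⟨x₁, hx₁y, hx₁⟩ := ((htop.eventually_gt_atTop y).and self_mem_nhdsWithin).exists
  obtain ⟨x₂, hx₂y, hx₂⟩ := ((hbot.eventually_lt_atBot y).and (eventually_gt_atTop x₁)).exists
  have hsub : Set.Icc x₁ x₂ ⊆ Set.Ioi (M + s0) := fun z hz => lt_of_lt_of_le hx₁ hz.1
  obtain ⟨z, hz, hfz⟩ := intermediate_value_Icc' hx₂.le (hcont.mono hsub) ⟨hx₂y.le, hx₁y.le⟩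
  exact ⟨z, hsub hz, hfz⟩
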